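/- Let G be a finite simple graph with Grundy number Γ(G) ≥ k. Then the largest adjacency eigenvalue of G satisfies λ₁(G) ≥ λ₁(T_k). -/

import Mathlib

/-- The first-fit (greedy) coloring of `G` along the vertex ordering `0 < 1 < ⋯`:
each vertex receives the smallest color (a natural number) not used by its
previously colored neighbors. -/
noncomputable def greedyColor {n : ℕ} (G : SimpleGraph (Fin n)) : Fin n → ℕ
  | i => sInf {c : ℕ | ∀ j : Fin n, j < i → G.Adj j i → greedyColor G j ≠ c}
  termination_by i => i.1

/-- The Grundy number of `G`: the largest number of colors used by the
first-fit coloring, over all orderings of the vertices. -/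
noncomputable def grundyNumber {V : Type} [Fintype V] (G : SimpleGraph V) : ℕ :=
  letI := Classical.decEq V
  Finset.univ.sup fun σ : Fin (Fintype.card V) ≃ V =>
    (Finset.univ.image (greedyColor (G.comap σ))).card

open scoped Matrix in
/-- `lambda1 G` : the largest eigenvalue of the adjacency matrix of `G`. -/
noncomputable def lambda1 {V : Type} [Fintype V] (G : SimpleGraph V) : ℝ :=
  letI := Classical.decRel G.Adj
  sSup {x : ℝ | ∃ v : V → ℝ, v ≠ 0 ∧ G.adjMatrix ℝ *ᵥ v = x • v}

/-- The binomial tree `T_k` on `2^(k-1)` vertices: `T_1 = K_1`, and `T_{k+1}` is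
obtained from `T_k` by attaching one new pendant leaf to every vertex.  Concretely,
vertex `j ≠ 0` is joined to the vertex obtained by clearing the highest set bit
of `j`. -/
def binomialTree (k : ℕ) : SimpleGraph (Fin (2 ^ (k - 1))) :=
  SimpleGraph.fromRel fun i j =>
    (j : ℕ) ≠ 0 ∧ (i : ℕ) + 2 ^ Nat.log 2 (j : ℕ) = (j : ℕ)

open Matrix Finset

/-! ### Auxiliary material -/

section Spectral

lemma exists_top_eigen {W : Type} [Fintype W] [Nonempty W] (H : SimpleGraph W)
    [DecidableRel H.Adj] :
    ∃ μ : ℝ, (∃ f : W → ℝ, f ≠ 0 ∧ H.adjMatrix ℝ *ᵥ f = μ • f) ∧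
      (∀ x : W → ℝ, ∑ w, x w * (H.adjMatrix ℝ *ᵥ x) w ≤ μ * ∑ w, x w ^ 2) := by
  classical
  set A := H.adjMatrix ℝ with hAdef
  have hA : A.IsHermitian := by
    ext i j
    simp [hAdef, Matrix.conjTranspose_apply, SimpleGraph.adjMatrix_apply,
      SimpleGraph.adj_comm]
  obtain ⟨i0, hi0⟩ := Finite.exists_max hA.eigenvalues
  set μ := hA.eigenvalues i0 with hμ
  set b := hA.eigenvectorBasis with hb
  refine ⟨μ, ⟨⇑(b i0), ?_, hA.mulVec_eigenvectorBasis i0⟩, ?_⟩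
  · have hnz := b.orthonormal.ne_zero i0
    intro h
    apply hnz
    ext w
    exact congrFun h w
  intro x
  set y : EuclideanSpace ℝ W := (WithLp.equiv 2 (W → ℝ)).symm x with hy
  have hyx : ∀ w, y w = x w := fun w => rfl
  set c : W → ℝ := fun i => b.repr y i with hc
  have hcinner : ∀ i, c i = ∑ w, b i w * x w := by
    intro i
    have h1 := b.repr_apply_apply y i
    rw [PiLp.inner_apply] at h1
    simpa [hc, hyx, mul_comm] using h1
  have key1 : ∑ w, x w ^ 2 = ∑ i, c i ^ 2 := by
    have h1 : (inner ℝ y y : ℝ) = ∑ w, x w ^ 2 := by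
      rw [PiLp.inner_apply]
      simp [hyx, sq]
    have h2 : (inner ℝ y y : ℝ) = ∑ i, c i ^ 2 := by
      rw [← b.repr.inner_map_map y y, PiLp.inner_apply]
      simp [hc, sq]
    rw [← h1, h2]
  have hxsum : x = ∑ i, c i • ⇑(b i) := by
    have h0 := b.sum_repr y
    calc x = (WithLp.linearEquiv 2 ℝ (W → ℝ)) y := rfl
      _ = (WithLp.linearEquiv 2 ℝ (W → ℝ)) (∑ i, c i • b i) := by
          exact congrArg _ h0.symm
      _ = ∑ i, c i • ⇑(b i) := by
          rw [map_sum]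
          refine Finset.sum_congr rfl fun i _ => ?_
          rw [_root_.map_smul]
          rfl
  have hAx : A *ᵥ x = ∑ i, (c i * hA.eigenvalues i) • ⇑(b i) := by
    conv_lhs => rw [hxsum]
    have h5 : A *ᵥ (∑ i, c i • ⇑(b i)) = ∑ i, c i • (A *ᵥ ⇑(b i)) := by
      simp only [Matrix.mulVec_sum, Matrix.mulVec_smul]
    rw [h5]
    refine Finset.sum_congr rfl fun i _ => ?_
    rw [hA.mulVec_eigenvectorBasis i, smul_smul]
  have key2 : ∑ w, x w * (A *ᵥ x) w = ∑ i, hA.eigenvalues i * c i ^ 2 := by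
    rw [hAx]
    have hptw : ∀ w, (∑ i, (c i * hA.eigenvalues i) • ⇑(b i)) w
        = ∑ i, (c i * hA.eigenvalues i) * b i w := by
      intro w
      rw [Finset.sum_apply]
      simp
    calc ∑ w, x w * (∑ i, (c i * hA.eigenvalues i) • ⇑(b i)) w
        = ∑ w, ∑ i, (c i * hA.eigenvalues i) * (b i w * x w) := by
          refine Finset.sum_congr rfl fun w _ => ?_
          rw [hptw w, Finset.mul_sum]
          refine Finset.sum_congr rfl fun i _ => by ring
      _ = ∑ i, ∑ w, (c i * hA.eigenvalues i) * (b i w * x w) := Finset.sum_comm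
      _ = ∑ i, hA.eigenvalues i * c i ^ 2 := by
          refine Finset.sum_congr rfl fun i _ => ?_
          rw [← Finset.mul_sum, ← hcinner i]
          ring
  rw [key1, key2, Finset.mul_sum]
  exact Finset.sum_le_sum fun i _ => by nlinarith [hi0 i, sq_nonneg (c i)]

lemma lambda1_eq_of {W : Type} [Fintype W] (H : SimpleGraph W) [inst : DecidableRel H.Adj]
    (μ : ℝ) (h1 : ∃ f : W → ℝ, f ≠ 0 ∧ H.adjMatrix ℝ *ᵥ f = μ • f)
    (h2 : ∀ x : W → ℝ, ∑ w, x w * (H.adjMatrix ℝ *ᵥ x) w ≤ μ * ∑ w, x w ^ 2) :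
    lambda1 H = μ := by
  have hinst : Classical.decRel H.Adj = inst := Subsingleton.elim _ _
  show (letI := Classical.decRel H.Adj;
    sSup {x : ℝ | ∃ v : W → ℝ, v ≠ 0 ∧ H.adjMatrix ℝ *ᵥ v = x • v}) = μ
  rw [hinst]
  refine IsGreatest.csSup_eq ⟨h1, ?_⟩
  rintro r ⟨v, hv, heig⟩
  have hpos : 0 < ∑ w, v w ^ 2 := by
    obtain ⟨w, hw⟩ := Function.ne_iff.mp hv
    exact Finset.sum_pos' (fun _ _ => sq_nonneg _)
      ⟨w, Finset.mem_univ w, by simpa [sq_abs] using pow_pos (abs_pos.mpr hw) 2⟩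
  have := h2 v
  rw [heig] at this
  have hQ : ∑ w, v w * (r • v) w = r * ∑ w, v w ^ 2 := by
    rw [Finset.mul_sum]
    exact Finset.sum_congr rfl fun w _ => by simp [sq]; ring
  rw [hQ] at this
  exact le_of_mul_le_mul_right (by simpa [mul_comm] using this) hpos

end Spectral

section Greedy

lemma greedyColor_eq {n : ℕ} (G : SimpleGraph (Fin n)) (i : Fin n) :
    greedyColor G i = sInf {c : ℕ | ∀ j : Fin n, j < i → G.Adj j i → greedyColor G j ≠ c} := by
  rw [greedyColor]

lemma greedy_witness {n : ℕ} (G : SimpleGraph (Fin n)) {i : Fin n} {c : ℕ}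
    (hc : c < greedyColor G i) : ∃ j, j < i ∧ G.Adj j i ∧ greedyColor G j = c := by
  rw [greedyColor_eq] at hc
  have h := Nat.notMem_of_lt_sInf hc
  simp only [Set.mem_setOf_eq, not_forall] at h
  obtain ⟨j, hj, hadj, hne⟩ := h
  exact ⟨j, hj, hadj, by simpa using hne⟩

lemma greedy_exact {n : ℕ} (G : SimpleGraph (Fin n)) {c : ℕ} (h : ∃ i, c ≤ greedyColor G i) :
    ∃ i, greedyColor G i = c := by
  obtain ⟨i, hi⟩ := h
  rcases eq_or_lt_of_le hi with h' | h'
  · exact ⟨i, h'.symm⟩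
  · obtain ⟨j, _, _, hj⟩ := greedy_witness G h'
    exact ⟨j, hj⟩

end Greedy

section Tree

/-- The color of vertex `j` in the canonical Grundy coloring of the binomial tree. -/
def colF (k : ℕ) (j : ℕ) : ℕ := if j = 0 then k - 1 else k - 2 - Nat.log 2 j

lemma colF_lt (k i j : ℕ) (hj : j ≠ 0) (hjN : j < 2 ^ (k - 1))
    (hij : i + 2 ^ Nat.log 2 j = j) : colF k j < colF k i := by
  have hlog : Nat.log 2 j < k - 1 := Nat.log_lt_of_lt_pow hj hjN
  have hk2 : 2 ≤ k := by omega
  have hi2 : i < 2 ^ Nat.log 2 j := by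
    have h2 := Nat.lt_pow_succ_log_self (by norm_num : 1 < 2) j
    rw [pow_succ] at h2
    omega
  by_cases hi : i = 0
  · simp only [colF, if_neg hj, if_pos hi]
    omega
  · have hlogi : Nat.log 2 i < Nat.log 2 j := Nat.log_lt_of_lt_pow hi hi2
    simp only [colF, if_neg hj, if_neg hi]
    omega

lemma colF_inj_nbr (k : ℕ) (s s' t : Fin (2 ^ (k - 1)))
    (h : (binomialTree k).Adj s t) (h' : (binomialTree k).Adj s' t)
    (hcol : colF k s = colF k s') : s = s' := by
  rw [binomialTree, SimpleGraph.fromRel_adj] at h h'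
  obtain ⟨-, h⟩ := h
  obtain ⟨-, h'⟩ := h'
  have hlt : ∀ (a b : Fin (2 ^ (k - 1))), (b : ℕ) ≠ 0 →
      (a : ℕ) + 2 ^ Nat.log 2 (b : ℕ) = (b : ℕ) → colF k b < colF k a :=
    fun a b hb hab => colF_lt k a b hb b.2 hab
  rcases h with ⟨ht0, hs⟩ | ⟨hs0, hs⟩ <;> rcases h' with ⟨ht0', hs'⟩ | ⟨hs0', hs'⟩
  · exact Fin.ext (by omega)
  · exact absurd hcol (by have := hlt s t ht0 hs; have := hlt t s' hs0' hs'; omega)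
  · exact absurd hcol (by have := hlt s' t ht0' hs'; have := hlt t s hs0 hs; omega)
  · -- both children of t
    have hs2 : Nat.log 2 (s : ℕ) < k - 1 := Nat.log_lt_of_lt_pow hs0 s.2
    have hs2' : Nat.log 2 (s' : ℕ) < k - 1 := Nat.log_lt_of_lt_pow hs0' s'.2
    have hk2 : 2 ≤ k := by omega
    have hlogeq : Nat.log 2 (s : ℕ) = Nat.log 2 (s' : ℕ) := by
      simp only [colF, if_neg hs0, if_neg hs0'] at hcol
      omega
    rw [hlogeq] at hs
    exact Fin.ext (by omega)

open scoped Classical in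
/-- Recursive construction of the image of the binomial tree inside `G'`. -/
noncomputable def buildAux {n : ℕ} (G' : SimpleGraph (Fin n)) (k : ℕ) (v0 : Fin n) : ℕ → Fin n
  | j =>
    if h : j = 0 then v0
    else
      let p := buildAux G' k v0 (j - 2 ^ Nat.log 2 j)
      if h2 : ∃ w : Fin n, w < p ∧ G'.Adj w p ∧ greedyColor G' w = colF k j then
        h2.choose
      else v0
  termination_by j => j
  decreasing_by
    exact Nat.sub_lt (Nat.pos_of_ne_zero h) (Nat.pow_pos (by norm_num))

lemma buildAux_spec {n : ℕ} (G' : SimpleGraph (Fin n)) (k : ℕ) (v0 : Fin n)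
    (hv0 : greedyColor G' v0 = k - 1) :
    ∀ j, j < 2 ^ (k - 1) → greedyColor G' (buildAux G' k v0 j) = colF k j ∧
      (j ≠ 0 → G'.Adj (buildAux G' k v0 j) (buildAux G' k v0 (j - 2 ^ Nat.log 2 j))) := by
  intro j
  induction j using Nat.strong_induction_on with
  | _ j IH =>
    intro hjN
    by_cases h0 : j = 0
    · subst h0
      constructor
      · rw [buildAux]
        simpa [colF] using hv0
      · intro h
        exact absurd rfl h
    · set p := j - 2 ^ Nat.log 2 j with hp
      have hple : 2 ^ Nat.log 2 j ≤ j := Nat.pow_log_le_self 2 h0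
      have hplt : p < j := Nat.sub_lt (Nat.pos_of_ne_zero h0)
        (Nat.pow_pos (by norm_num))
      have hpeq : p + 2 ^ Nat.log 2 j = j := by omega
      have hIH := IH p hplt (lt_trans hplt hjN)
      have hcol : colF k j < colF k p := colF_lt k p j h0 hjN hpeq
      rw [← hIH.1] at hcol
      obtain ⟨w, hw1, hw2, hw3⟩ := greedy_witness G' hcol
      have h2 : ∃ w : Fin n, w < buildAux G' k v0 p ∧ G'.Adj w (buildAux G' k v0 p) ∧
          greedyColor G' w = colF k j := ⟨w, hw1, hw2, hw3⟩
      constructor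
      · rw [buildAux, dif_neg h0]
        have h2' : ∃ w : Fin n, w < buildAux G' k v0 (j - 2 ^ Nat.log 2 j) ∧
          G'.Adj w (buildAux G' k v0 (j - 2 ^ Nat.log 2 j)) ∧ greedyColor G' w = colF k j := h2
        rw [dif_pos h2']
        exact h2'.choose_spec.2.2
      · intro _
        rw [buildAux, dif_neg h0]
        have h2' : ∃ w : Fin n, w < buildAux G' k v0 (j - 2 ^ Nat.log 2 j) ∧
          G'.Adj w (buildAux G' k v0 (j - 2 ^ Nat.log 2 j)) ∧ greedyColor G' w = colF k j := h2
        rw [dif_pos h2']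
        exact h2'.choose_spec.2.1

end Tree

lemma sq_sum_le_of_card_le_one {ι : Type} {T : Finset ι} (h : T.card ≤ 1) (f : ι → ℝ) :
    (∑ t ∈ T, f t) ^ 2 ≤ ∑ t ∈ T, f t ^ 2 := by
  interval_cases h' : T.card
  · rw [Finset.card_eq_zero.mp h']
    simp
  · obtain ⟨a, rfl⟩ := Finset.card_eq_one.mp h'
    simp

lemma inner_rect {ι : Type} [Fintype ι] (S T : Finset ι) (R : ι → ι → Prop) [DecidableRel R]
    (f : ι → ℝ)
    (hrow : ∀ s ∈ S, ∀ t ∈ T, ∀ t' ∈ T, R s t → R s t' → t = t')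
    (hcol : ∀ t ∈ T, ∀ s ∈ S, ∀ s' ∈ S, R s t → R s' t → s = s') :
    ∑ s ∈ S, ∑ t ∈ T, (if R s t then (1 : ℝ) else 0) * |f s| * |f t| ≤
      Real.sqrt (∑ s ∈ S, f s ^ 2) * Real.sqrt (∑ t ∈ T, f t ^ 2) := by
  set F : ι → ℝ := fun s => ∑ t ∈ T.filter (R s ·), |f t| with hF
  have hLHS : ∑ s ∈ S, ∑ t ∈ T, (if R s t then (1 : ℝ) else 0) * |f s| * |f t|
      = ∑ s ∈ S, |f s| * F s := by
    refine Finset.sum_congr rfl fun s _ => ?_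
    rw [hF]
    simp only [Finset.mul_sum, Finset.sum_filter]
    refine Finset.sum_congr rfl fun t _ => ?_
    by_cases h : R s t <;> simp [h]
  have hFbound : ∑ s ∈ S, F s ^ 2 ≤ ∑ t ∈ T, f t ^ 2 := by
    have h1 : ∀ s ∈ S, F s ^ 2 ≤ ∑ t ∈ T.filter (R s ·), f t ^ 2 := by
      intro s hs
      have hcard : (T.filter (R s ·)).card ≤ 1 := by
        refine Finset.card_le_one.mpr fun t ht t' ht' => ?_
        rw [Finset.mem_filter] at ht ht'
        exact hrow s hs t ht.1 t' ht'.1 ht.2 ht'.2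
      calc F s ^ 2 ≤ ∑ t ∈ T.filter (R s ·), |f t| ^ 2 :=
            sq_sum_le_of_card_le_one hcard _
        _ = ∑ t ∈ T.filter (R s ·), f t ^ 2 := by simp [sq_abs]
    calc ∑ s ∈ S, F s ^ 2 ≤ ∑ s ∈ S, ∑ t ∈ T.filter (R s ·), f t ^ 2 :=
          Finset.sum_le_sum h1
      _ = ∑ s ∈ S, ∑ t ∈ T, if R s t then f t ^ 2 else 0 := by
          refine Finset.sum_congr rfl fun s _ => ?_
          rw [Finset.sum_filter]
      _ = ∑ t ∈ T, ∑ s ∈ S, if R s t then f t ^ 2 else 0 := Finset.sum_comm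
      _ ≤ ∑ t ∈ T, f t ^ 2 := by
          refine Finset.sum_le_sum fun t ht => ?_
          have hcard : (S.filter (R · t)).card ≤ 1 := by
            refine Finset.card_le_one.mpr fun s hs s' hs' => ?_
            rw [Finset.mem_filter] at hs hs'
            exact hcol t ht s hs.1 s' hs'.1 hs.2 hs'.2
          calc ∑ s ∈ S, (if R s t then f t ^ 2 else 0)
              = ∑ s ∈ S.filter (R · t), f t ^ 2 := by rw [Finset.sum_filter]
            _ = (S.filter (R · t)).card * f t ^ 2 := by
                rw [Finset.sum_const, nsmul_eq_mul]
            _ ≤ 1 * f t ^ 2 := by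
                have : ((S.filter (R · t)).card : ℝ) ≤ 1 := by exact_mod_cast hcard
                nlinarith [sq_nonneg (f t)]
            _ = f t ^ 2 := one_mul _
  rw [hLHS]
  have hCS := Finset.sum_mul_sq_le_sq_mul_sq S (fun s => |f s|) F
  have habs : ∑ s ∈ S, |f s| ^ 2 = ∑ s ∈ S, f s ^ 2 := by simp [sq_abs]
  have hL0 : 0 ≤ ∑ s ∈ S, |f s| * F s := by
    refine Finset.sum_nonneg fun s _ => mul_nonneg (abs_nonneg _) ?_
    exact Finset.sum_nonneg fun t _ => abs_nonneg _
  have hP : 0 ≤ ∑ s ∈ S, f s ^ 2 := Finset.sum_nonneg fun s _ => sq_nonneg _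
  have hQ : 0 ≤ ∑ t ∈ T, f t ^ 2 := Finset.sum_nonneg fun t _ => sq_nonneg _
  have h2 : (∑ s ∈ S, |f s| * F s) ^ 2 ≤ (∑ s ∈ S, f s ^ 2) * (∑ t ∈ T, f t ^ 2) := by
    calc (∑ s ∈ S, |f s| * F s) ^ 2 ≤ (∑ s ∈ S, |f s| ^ 2) * ∑ s ∈ S, F s ^ 2 := hCS
      _ ≤ (∑ s ∈ S, f s ^ 2) * (∑ t ∈ T, f t ^ 2) := by
          rw [habs]
          exact mul_le_mul_of_nonneg_left hFbound hP
  calc ∑ s ∈ S, |f s| * F s ≤ Real.sqrt ((∑ s ∈ S, f s ^ 2) * ∑ t ∈ T, f t ^ 2) :=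
        Real.le_sqrt_of_sq_le h2
    _ = Real.sqrt (∑ s ∈ S, f s ^ 2) * Real.sqrt (∑ t ∈ T, f t ^ 2) := Real.sqrt_mul hP _

/-- If `G` has Grundy number at least `k`, then the largest adjacency eigenvalue of
`G` is at least `λ₁(T_k)`. -/
theorem lambda1_ge_lambda1_binomialTree {V : Type} [Fintype V] (G : SimpleGraph V)
    (k : ℕ) (hk : 1 ≤ k) (hG : k ≤ grundyNumber G) :
    lambda1 (binomialTree k) ≤ lambda1 G := by
  classical
  rw [grundyNumber] at hG
  obtain ⟨σ, -, hσ⟩ := (Finset.le_sup_iff (show ⊥ < k from hk)).mp hG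
  set G' := G.comap ⇑σ with hG'
  set gc := greedyColor G' with hgc
  have himg : ∃ i, k - 1 ≤ gc i := by
    have hne : (Finset.univ.image gc).Nonempty := by
      rw [← Finset.card_pos]
      omega
    have hMmem := (Finset.univ.image gc).max'_mem hne
    rw [Finset.mem_image] at hMmem
    obtain ⟨i, -, hi⟩ := hMmem
    refine ⟨i, ?_⟩
    have hsub : Finset.univ.image gc ⊆ Finset.range ((Finset.univ.image gc).max' hne + 1) := by
      intro c hc
      rw [Finset.mem_range]
      have := Finset.le_max' _ c hc
      omega
    have hcard := Finset.card_le_card hsub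
    rw [Finset.card_range] at hcard
    omega
  obtain ⟨v0, hv0⟩ := greedy_exact G' himg
  haveI : Nonempty V := ⟨σ v0⟩
  haveI hNE : Nonempty (Fin (2 ^ (k - 1))) :=
    ⟨⟨0, Nat.pow_pos (by norm_num)⟩⟩
  letI instT : DecidableRel (binomialTree k).Adj := Classical.decRel _
  letI instG : DecidableRel G.Adj := Classical.decRel _
  have hspec := buildAux_spec G' k v0 hv0
  set φ : Fin (2 ^ (k - 1)) → Fin (Fintype.card V) := fun j => buildAux G' k v0 j.1 with hφ
  set ψ : Fin (2 ^ (k - 1)) → V := fun j => σ (φ j) with hψ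
  have hhomkey : ∀ s t : Fin (2 ^ (k - 1)), (t : ℕ) ≠ 0 →
      (s : ℕ) + 2 ^ Nat.log 2 (t : ℕ) = (t : ℕ) → G.Adj (ψ s) (ψ t) := by
    intro s t ht0 hst
    have h2 := (hspec t.1 t.2).2 ht0
    have he : t.1 - 2 ^ Nat.log 2 t.1 = s.1 := by omega
    rw [he] at h2
    rw [hG', SimpleGraph.comap_adj] at h2
    exact h2.symm
  have hhom : ∀ s t : Fin (2 ^ (k - 1)), (binomialTree k).Adj s t → G.Adj (ψ s) (ψ t) := by
    intro s t h
    rw [binomialTree, SimpleGraph.fromRel_adj] at h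
    rcases h.2 with h' | h'
    · exact hhomkey s t h'.1 h'.2
    · exact (hhomkey t s h'.1 h'.2).symm
  have hgcφ : ∀ t : Fin (2 ^ (k - 1)), gc (φ t) = colF k t.1 := fun t => (hspec t.1 t.2).1
  have hinj : ∀ t s s' : Fin (2 ^ (k - 1)), (binomialTree k).Adj s t →
      (binomialTree k).Adj s' t → ψ s = ψ s' → s = s' := by
    intro t s s' h h' he
    have hφe : φ s = φ s' := σ.injective he
    refine colF_inj_nbr k s s' t h h' ?_
    rw [← hgcφ s, ← hgcφ s', hφe]
  obtain ⟨μT, hTex, hTray⟩ := exists_top_eigen (binomialTree k)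
  obtain ⟨μG, hGex, hGray⟩ := exists_top_eigen G
  rw [lambda1_eq_of (binomialTree k) μT hTex hTray, lambda1_eq_of G μG hGex hGray]
  obtain ⟨f, hf0, hfeig⟩ := hTex
  set B := (binomialTree k).adjMatrix ℝ with hB
  set A := G.adjMatrix ℝ with hA
  set g : V → ℝ :=
    fun u => Real.sqrt (∑ t ∈ Finset.univ.filter (fun t => ψ t = u), f t ^ 2) with hg
  have hgnn : ∀ u, 0 ≤ g u := fun u => Real.sqrt_nonneg _
  have hgsq : ∀ u, g u ^ 2 = ∑ t ∈ Finset.univ.filter (fun t => ψ t = u), f t ^ 2 := by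
    intro u
    rw [hg]
    exact Real.sq_sqrt (Finset.sum_nonneg fun _ _ => sq_nonneg _)
  have hgsum : ∑ u, g u ^ 2 = ∑ t, f t ^ 2 := by
    simp_rw [hgsq]
    exact Finset.sum_fiberwise _ _ _
  have hfpos : 0 < ∑ t, f t ^ 2 := by
    obtain ⟨w, hw⟩ := Function.ne_iff.mp hf0
    exact Finset.sum_pos' (fun _ _ => sq_nonneg _)
      ⟨w, Finset.mem_univ w, by simpa [sq_abs] using pow_pos (abs_pos.mpr hw) 2⟩
  -- step 1
  have step1 : μT * ∑ t, f t ^ 2 = ∑ s, ∑ t, B s t * f s * f t := by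
    calc μT * ∑ t, f t ^ 2 = ∑ s, f s * (B *ᵥ f) s := by
          rw [hfeig, Finset.mul_sum]
          refine Finset.sum_congr rfl fun s _ => ?_
          simp [sq]
          ring
      _ = ∑ s, ∑ t, B s t * f s * f t := by
          refine Finset.sum_congr rfl fun s _ => ?_
          rw [Matrix.mulVec, dotProduct, Finset.mul_sum]
          exact Finset.sum_congr rfl fun t _ => by ring
  have hBnn : ∀ s t, 0 ≤ B s t := by
    intro s t
    rw [hB, SimpleGraph.adjMatrix_apply]
    split <;> norm_num
  have step2 : ∑ s, ∑ t, B s t * f s * f t ≤ ∑ s, ∑ t, B s t * |f s| * |f t| := by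
    refine Finset.sum_le_sum fun s _ => Finset.sum_le_sum fun t _ => ?_
    calc B s t * f s * f t = B s t * (f s * f t) := by ring
      _ ≤ B s t * |f s * f t| := mul_le_mul_of_nonneg_left (le_abs_self _) (hBnn s t)
      _ = B s t * |f s| * |f t| := by rw [abs_mul]; ring
  -- fiber decomposition
  have efib : ∀ (F : Fin (2 ^ (k - 1)) → ℝ),
      ∑ u : V, ∑ s ∈ Finset.univ.filter (fun s => ψ s = u), F s = ∑ s, F s :=
    fun F => Finset.sum_fiberwise _ _ _
  have step3 : ∑ s, ∑ t, B s t * |f s| * |f t|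
      = ∑ u : V, ∑ v : V, ∑ s ∈ Finset.univ.filter (fun s => ψ s = u),
          ∑ t ∈ Finset.univ.filter (fun t => ψ t = v), B s t * |f s| * |f t| := by
    rw [← efib (fun s => ∑ t, B s t * |f s| * |f t|)]
    refine Finset.sum_congr rfl fun u _ => ?_
    refine Eq.trans ?_ Finset.sum_comm
    refine Finset.sum_congr rfl fun s _ => ?_
    exact (efib (fun t => B s t * |f s| * |f t|)).symm
  -- step 4 : per-pair bound
  have step4 : ∀ u v : V,
      (∑ s ∈ Finset.univ.filter (fun s => ψ s = u),
        ∑ t ∈ Finset.univ.filter (fun t => ψ t = v), B s t * |f s| * |f t|)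
      ≤ A u v * (g u * g v) := by
    intro u v
    by_cases hE : ∃ s ∈ Finset.univ.filter (fun s => ψ s = u),
        ∃ t ∈ Finset.univ.filter (fun t => ψ t = v), (binomialTree k).Adj s t
    · obtain ⟨s0, hs0, t0, ht0, hadj0⟩ := hE
      rw [Finset.mem_filter] at hs0 ht0
      have hAuv : A u v = 1 := by
        rw [hA, SimpleGraph.adjMatrix_apply, if_pos]
        rw [← hs0.2, ← ht0.2]
        exact hhom s0 t0 hadj0
      rw [hAuv, one_mul]
      have hR := inner_rect (Finset.univ.filter (fun s => ψ s = u))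
        (Finset.univ.filter (fun t => ψ t = v)) (binomialTree k).Adj f
        (fun s hs t ht t' ht' h1 h2 => by
          rw [Finset.mem_filter] at ht ht'
          exact hinj s t t' h1.symm h2.symm (ht.2.trans ht'.2.symm))
        (fun t ht s hs s' hs' h1 h2 => by
          rw [Finset.mem_filter] at hs hs'
          exact hinj t s s' h1 h2 (hs.2.trans hs'.2.symm))
      rw [hg]
      refine le_trans (le_of_eq ?_) hR
      refine Finset.sum_congr rfl fun s _ => Finset.sum_congr rfl fun t _ => ?_
      rw [hB, SimpleGraph.adjMatrix_apply]
    · have hz : ∀ s ∈ Finset.univ.filter (fun s => ψ s = u),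
          ∀ t ∈ Finset.univ.filter (fun t => ψ t = v), B s t * |f s| * |f t| = 0 := by
        intro s hs t ht
        have : ¬ (binomialTree k).Adj s t := fun h => hE ⟨s, hs, t, ht, h⟩
        rw [hB, SimpleGraph.adjMatrix_apply, if_neg this]
        ring
      have h0 : (∑ s ∈ Finset.univ.filter (fun s => ψ s = u),
          ∑ t ∈ Finset.univ.filter (fun t => ψ t = v), B s t * |f s| * |f t|) = 0 := by
        refine Finset.sum_eq_zero fun s hs => Finset.sum_eq_zero fun t ht => hz s hs t ht
      rw [h0]
      have hAnn : 0 ≤ A u v := by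
        rw [hA, SimpleGraph.adjMatrix_apply]
        split <;> norm_num
      exact mul_nonneg hAnn (mul_nonneg (hgnn u) (hgnn v))
  -- step 5
  have step5 : ∑ u : V, ∑ v : V, A u v * (g u * g v) = ∑ u, g u * (A *ᵥ g) u := by
    refine Finset.sum_congr rfl fun u _ => ?_
    rw [Matrix.mulVec, dotProduct, Finset.mul_sum]
    exact Finset.sum_congr rfl fun v _ => by ring
  -- assemble
  have chain : μT * ∑ t, f t ^ 2 ≤ μG * ∑ t, f t ^ 2 := by
    calc μT * ∑ t, f t ^ 2 = ∑ s, ∑ t, B s t * f s * f t := step1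
      _ ≤ ∑ s, ∑ t, B s t * |f s| * |f t| := step2
      _ = ∑ u : V, ∑ v : V, ∑ s ∈ Finset.univ.filter (fun s => ψ s = u),
            ∑ t ∈ Finset.univ.filter (fun t => ψ t = v), B s t * |f s| * |f t| := step3
      _ ≤ ∑ u : V, ∑ v : V, A u v * (g u * g v) :=
          Finset.sum_le_sum fun u _ => Finset.sum_le_sum fun v _ => step4 u v
      _ = ∑ u, g u * (A *ᵥ g) u := step5
      _ ≤ μG * ∑ u, g u ^ 2 := hGray g
      _ = μG * ∑ t, f t ^ 2 := by rw [hgsum]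
  exact le_of_mul_le_mul_right (by simpa [mul_comm] using chain) hfpos
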